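/- Consider a VSP instance with n vehicles, walks W_j^1,…,W_j^{q_j}, trip request times ρ_j, soft deadlines d_j, hard deadlines d'_j, minimum travel times τ_min,j^i, maximum travel times τ_max,j^i, and separation constants s_{j1,j2}^{i1,i2} ≥ 0. Suppose the big-M constants satisfy M_{j1,j2}^{i1,i2} ≥ max_j d'_j − min_j ρ_j for every constrained pair, and M_j ≥ max(d_j − ρ_j, d'_j − d_j) for every j. Then for every VSP-feasible schedule t there exist reals P_{j1,j2}^{i1,i2}, N_{j1,j2}^{i1,i2}, binaries b_{j1,j2}^{i1,i2} ∈ {0,1}, reals X_j, and binaries l_j ∈ {0,1} such that all MIP constraints hold and the sum of the l_j equals the number of tardy vehicles, i.e. the cardinality of {j : t_j^{q_j} > d_j}. -/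

import Mathlib

/-- VSP-feasibility of a schedule `t`: trip request time, trip continuity and
hard deadline chain `ρ_j ≤ t_j^1 ≤ … ≤ t_j^{q_j} ≤ d'_j`; travel times
`τmin_j^i ≤ t_j^{i+1} − t_j^i ≤ τmax_j^i`; and separation
`|t_{j1}^{i1} − t_{j2}^{i2}| ≥ s` at coinciding walk vertices. -/
def VSPFeasible {n : ℕ} {V : Type} (q : Fin n → ℕ) (hq : ∀ j, 0 < q j)
    (W : (j : Fin n) → Fin (q j) → V)
    (ρ d' : Fin n → ℝ)
    (τmin τmax : (j : Fin n) → Fin (q j) → ℝ)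
    (s : (j1 j2 : Fin n) → Fin (q j1) → Fin (q j2) → ℝ)
    (t : (j : Fin n) → Fin (q j) → ℝ) : Prop :=
  (∀ j, ρ j ≤ t j ⟨0, hq j⟩) ∧
  (∀ (j : Fin n) (i : Fin (q j)) (h : i.val + 1 < q j), t j i ≤ t j ⟨i.val + 1, h⟩) ∧
  (∀ j, t j ⟨q j - 1, Nat.sub_lt (hq j) Nat.one_pos⟩ ≤ d' j) ∧
  (∀ (j : Fin n) (i : Fin (q j)) (h : i.val + 1 < q j),
      τmin j i ≤ t j ⟨i.val + 1, h⟩ - t j i ∧ t j ⟨i.val + 1, h⟩ - t j i ≤ τmax j i) ∧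
  (∀ (j1 j2 : Fin n) (i1 : Fin (q j1)) (i2 : Fin (q j2)),
      j1 ≠ j2 → W j1 i1 = W j2 i2 → |t j1 i1 - t j2 i2| ≥ s j1 j2 i1 i2)

/-- The MIP constraints of the VSP formulation: the chain, travel-time and
hard-deadline constraints on `t`; the big-M linearization
`t_{j1}^{i1} − t_{j2}^{i2} = P − N`, `b·s ≤ P ≤ b·M`, `(1−b)·s ≤ N ≤ (1−b)·M`
with binary `b` for every constrained pair; and the tardiness constraints
`d_j − t_j^{q_j} ≤ X_j`, `0 ≤ X_j`, `X_j ≤ M_j·(1 − l_j)`,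
`X_j ≤ d_j − t_j^{q_j} + M_j·l_j` with binary `l_j` for every vehicle. -/
def MIPConstraints {n : ℕ} {V : Type} (q : Fin n → ℕ) (hq : ∀ j, 0 < q j)
    (W : (j : Fin n) → Fin (q j) → V)
    (ρ d d' : Fin n → ℝ)
    (τmin τmax : (j : Fin n) → Fin (q j) → ℝ)
    (s Msep : (j1 j2 : Fin n) → Fin (q j1) → Fin (q j2) → ℝ)
    (Mveh : Fin n → ℝ)
    (t : (j : Fin n) → Fin (q j) → ℝ)
    (P N b : (j1 j2 : Fin n) → Fin (q j1) → Fin (q j2) → ℝ)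
    (X l : Fin n → ℝ) : Prop :=
  (∀ j, ρ j ≤ t j ⟨0, hq j⟩) ∧
  (∀ (j : Fin n) (i : Fin (q j)) (h : i.val + 1 < q j), t j i ≤ t j ⟨i.val + 1, h⟩) ∧
  (∀ j, t j ⟨q j - 1, Nat.sub_lt (hq j) Nat.one_pos⟩ ≤ d' j) ∧
  (∀ (j : Fin n) (i : Fin (q j)) (h : i.val + 1 < q j),
      τmin j i ≤ t j ⟨i.val + 1, h⟩ - t j i ∧ t j ⟨i.val + 1, h⟩ - t j i ≤ τmax j i) ∧
  (∀ (j1 j2 : Fin n) (i1 : Fin (q j1)) (i2 : Fin (q j2)),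
      j1 ≠ j2 → W j1 i1 = W j2 i2 →
      (b j1 j2 i1 i2 = 0 ∨ b j1 j2 i1 i2 = 1) ∧
      t j1 i1 - t j2 i2 = P j1 j2 i1 i2 - N j1 j2 i1 i2 ∧
      b j1 j2 i1 i2 * s j1 j2 i1 i2 ≤ P j1 j2 i1 i2 ∧
      P j1 j2 i1 i2 ≤ b j1 j2 i1 i2 * Msep j1 j2 i1 i2 ∧
      (1 - b j1 j2 i1 i2) * s j1 j2 i1 i2 ≤ N j1 j2 i1 i2 ∧
      N j1 j2 i1 i2 ≤ (1 - b j1 j2 i1 i2) * Msep j1 j2 i1 i2) ∧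
  (∀ j, (l j = 0 ∨ l j = 1) ∧
      d j - t j ⟨q j - 1, Nat.sub_lt (hq j) Nat.one_pos⟩ ≤ X j ∧
      0 ≤ X j ∧
      X j ≤ Mveh j * (1 - l j) ∧
      X j ≤ d j - t j ⟨q j - 1, Nat.sub_lt (hq j) Nat.one_pos⟩ + Mveh j * l j)


lemma chain_mono {m : ℕ} (t : Fin m → ℝ)
    (h : ∀ (i : Fin m) (hi : i.val + 1 < m), t i ≤ t ⟨i.val + 1, hi⟩) :
    ∀ (k : ℕ) (hk : k < m) (a : Fin m), a.val ≤ k → t a ≤ t ⟨k, hk⟩ := by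
  intro k
  induction k with
  | zero => intro hk a ha
            have : a = ⟨0, hk⟩ := Fin.ext (Nat.le_zero.mp ha)
            simp [this]
  | succ k ih =>
      intro hk a ha
      rcases Nat.lt_or_ge a.val (k+1) with h1 | h1
      · have hk' : k < m := Nat.lt_of_succ_lt hk
        exact le_trans (ih hk' a (Nat.lt_succ_iff.mp h1)) (h ⟨k, hk'⟩ hk)
      · have : a = ⟨k+1, hk⟩ := Fin.ext (le_antisymm ha h1)
        simp [this]

/-- If the separation constants are nonnegative, every
separation big-M constant dominates `max_j d'_j − min_j ρ_j` (expressed as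
`d'_{j'} − ρ_{j''} ≤ M` for all vehicles `j', j''`), and each vehicle's big-M
constant dominates both `d_j − ρ_j` and `d'_j − d_j`, then every VSP-feasible
schedule `t` extends to a full assignment of the MIP variables satisfying all
MIP constraints in which `∑_j l_j` equals the number of tardy vehicles
`#{j : t_j^{q_j} > d_j}`. -/
theorem vsp_feasible_extends_to_mip_solution
    {n : ℕ} {V : Type} (q : Fin n → ℕ) (hq : ∀ j, 0 < q j)
    (W : (j : Fin n) → Fin (q j) → V)
    (ρ d d' : Fin n → ℝ)
    (τmin τmax : (j : Fin n) → Fin (q j) → ℝ)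
    (s Msep : (j1 j2 : Fin n) → Fin (q j1) → Fin (q j2) → ℝ)
    (Mveh : Fin n → ℝ)
    (hs : ∀ (j1 j2 : Fin n) (i1 : Fin (q j1)) (i2 : Fin (q j2)),
        j1 ≠ j2 → W j1 i1 = W j2 i2 → 0 ≤ s j1 j2 i1 i2)
    (hMsep : ∀ (j1 j2 : Fin n) (i1 : Fin (q j1)) (i2 : Fin (q j2)),
        j1 ≠ j2 → W j1 i1 = W j2 i2 →
        ∀ j' j'' : Fin n, d' j' - ρ j'' ≤ Msep j1 j2 i1 i2)
    (hMveh : ∀ j : Fin n, d j - ρ j ≤ Mveh j ∧ d' j - d j ≤ Mveh j)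
    (t : (j : Fin n) → Fin (q j) → ℝ)
    (ht : VSPFeasible q hq W ρ d' τmin τmax s t) :
    ∃ (P N b : (j1 j2 : Fin n) → Fin (q j1) → Fin (q j2) → ℝ) (X l : Fin n → ℝ),
      MIPConstraints q hq W ρ d d' τmin τmax s Msep Mveh t P N b X l ∧
      ∑ j, l j =
        ((Finset.univ.filter
            (fun j : Fin n =>
              d j < t j ⟨q j - 1, Nat.sub_lt (hq j) Nat.one_pos⟩)).card : ℝ) := by
  obtain ⟨h1, h2, h3, h4, h5⟩ := ht
  have hlow : ∀ (j : Fin n) (i : Fin (q j)), ρ j ≤ t j i := by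
    intro j i
    have := chain_mono (t j) (h2 j) i.val i.isLt ⟨0, hq j⟩ (Nat.zero_le _)
    simpa using le_trans (h1 j) this
  have hhigh : ∀ (j : Fin n) (i : Fin (q j)), t j i ≤ d' j := by
    intro j i
    have := chain_mono (t j) (h2 j) (q j - 1) (Nat.sub_lt (hq j) Nat.one_pos)
      i (Nat.le_pred_of_lt i.isLt)
    exact le_trans this (h3 j)
  refine ⟨fun j1 j2 i1 i2 => if t j2 i2 ≤ t j1 i1 then t j1 i1 - t j2 i2 else 0,
    fun j1 j2 i1 i2 => if t j2 i2 ≤ t j1 i1 then 0 else t j2 i2 - t j1 i1,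
    fun j1 j2 i1 i2 => if t j2 i2 ≤ t j1 i1 then 1 else 0,
    fun j => max (d j - t j ⟨q j - 1, Nat.sub_lt (hq j) Nat.one_pos⟩) 0,
    fun j => if d j < t j ⟨q j - 1, Nat.sub_lt (hq j) Nat.one_pos⟩ then 1 else 0,
    ⟨h1, h2, h3, h4, ?_, ?_⟩, ?_⟩
  · intro j1 j2 i1 i2 hne hW
    have hsep := h5 j1 j2 i1 i2 hne hW
    by_cases hc : t j2 i2 ≤ t j1 i1
    · have habs : |t j1 i1 - t j2 i2| = t j1 i1 - t j2 i2 :=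
        abs_of_nonneg (sub_nonneg.mpr hc)
      have hM : t j1 i1 - t j2 i2 ≤ Msep j1 j2 i1 i2 :=
        le_trans (sub_le_sub (hhigh j1 i1) (hlow j2 i2))
          (hMsep j1 j2 i1 i2 hne hW j1 j2)
      simp only [if_pos hc]
      refine ⟨by norm_num, by ring, ?_, by linarith, by linarith, by linarith⟩
      rw [habs] at hsep; linarith
    · have hlt : t j1 i1 < t j2 i2 := lt_of_not_ge hc
      have habs : |t j1 i1 - t j2 i2| = t j2 i2 - t j1 i1 := by
        rw [abs_sub_comm]; exact abs_of_nonneg (sub_nonneg.mpr hlt.le)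
      have hM : t j2 i2 - t j1 i1 ≤ Msep j1 j2 i1 i2 :=
        le_trans (sub_le_sub (hhigh j2 i2) (hlow j1 i1))
          (hMsep j1 j2 i1 i2 hne hW j2 j1)
      simp only [if_neg hc]
      refine ⟨by norm_num, by ring, by linarith, by linarith, ?_, by linarith⟩
      rw [habs] at hsep; linarith
  · intro j
    beta_reduce
    set tl := t j ⟨q j - 1, Nat.sub_lt (hq j) Nat.one_pos⟩ with htl
    have hρ : ρ j ≤ tl := hlow j _
    have hd' : tl ≤ d' j := h3 j
    obtain ⟨hM1, hM2⟩ := hMveh j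
    by_cases hc : d j < tl
    · have hX : max (d j - tl) 0 = 0 := max_eq_right (by linarith)
      simp only [if_pos hc, hX]
      exact ⟨by norm_num, by linarith [le_max_left (d j - tl) (0:ℝ)], le_refl _,
        by linarith, by linarith⟩
    · push_neg at hc
      have hX : max (d j - tl) 0 = d j - tl := max_eq_left (by linarith)
      simp only [if_neg (not_lt.mpr hc), hX]
      exact ⟨by norm_num, le_refl _, by linarith, by linarith, by linarith⟩
  · simp [Finset.sum_boole]
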